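/- For x > 0, n ≥ 2, r = (Σ_{k=1}^n 1/(1+xk))⁻¹, and P(k) = (1 − Σ_{i=1}^k r/(1+ix))·(1+kx): if P(k) > P(k+1) for some k with k+2 ≤ n−1, then P(k+1) > P(k+2). Consequently, once the sequence of payoff amounts of the constant-installment loan starts decreasing, it continues to decrease. -/

import Mathlib

/-- The payoff amount at time `k` of the constant-installment loan with principal 1,
`n` installments, at simple interest rate `x`. -/
noncomputable def payoff (x : ℝ) (n k : ℕ) : ℝ :=
  (1 - ∑ i ∈ Finset.Icc 1 k, (∑ j ∈ Finset.Icc 1 n, 1 / (1 + x * j))⁻¹ / (1 + i * x)) *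
    (1 + k * x)

lemma payoff_diff (x : ℝ) (hx : 0 < x) (n : ℕ) (hn : 2 ≤ n) (m : ℕ) :
    payoff x n m - payoff x n (m + 1)
      = (∑ j ∈ Finset.Icc 1 n, 1 / (1 + x * j))⁻¹
        - x * (1 - ∑ i ∈ Finset.Icc 1 m,
            (∑ j ∈ Finset.Icc 1 n, 1 / (1 + x * j))⁻¹ / (1 + i * x)) := by
  have hsum : ∑ i ∈ Finset.Icc 1 (m+1),
        (∑ j ∈ Finset.Icc 1 n, 1 / (1 + x * j))⁻¹ / (1 + (i:ℝ) * x)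
      = (∑ i ∈ Finset.Icc 1 m,
          (∑ j ∈ Finset.Icc 1 n, 1 / (1 + x * j))⁻¹ / (1 + (i:ℝ) * x))
        + (∑ j ∈ Finset.Icc 1 n, 1 / (1 + x * j))⁻¹ / (1 + ((m+1:ℕ):ℝ) * x) :=
    Finset.sum_Icc_succ_top (by omega) _
  have hne : (1 + ((m+1:ℕ):ℝ) * x) ≠ 0 := by positivity
  unfold payoff
  rw [hsum]
  have hc := div_mul_cancel₀ (∑ j ∈ Finset.Icc 1 n, 1 / (1 + x * j))⁻¹ hne
  push_cast at hc ⊢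
  linear_combination hc

theorem payoff_decreasing_propagates (x : ℝ) (hx : 0 < x) (n : ℕ) (hn : 2 ≤ n)
    (k : ℕ) (hk1 : 1 ≤ k) (hk2 : k + 2 ≤ n - 1)
    (h : payoff x n k > payoff x n (k + 1)) :
    payoff x n (k + 1) > payoff x n (k + 2) := by
  set r : ℝ := (∑ j ∈ Finset.Icc 1 n, 1 / (1 + x * j))⁻¹ with hr
  have hrpos : 0 < r := by
    rw [hr]
    apply inv_pos.mpr
    apply Finset.sum_pos
    · intro j hj
      have h1 : (0:ℝ) < 1 + x * j := by positivity
      positivity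
    · exact Finset.nonempty_Icc.mpr (by omega)
  have d1 := payoff_diff x hx n hn k
  have d2 := payoff_diff x hx n hn (k + 1)
  have hsum : ∑ i ∈ Finset.Icc 1 (k+1), r / (1 + (i:ℝ) * x)
      = (∑ i ∈ Finset.Icc 1 k, r / (1 + (i:ℝ) * x)) + r / (1 + ((k+1:ℕ):ℝ) * x) :=
    Finset.sum_Icc_succ_top (by omega) _
  have hterm : 0 < r / (1 + ((k+1:ℕ):ℝ) * x) := by
    apply div_pos hrpos
    positivity
  rw [← hr] at d1 d2
  rw [hsum] at d2
  nlinarith [d1, d2, h, hterm, hx]
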